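/- arXiv:0711.2775 — 4 statements merged into one kernel-verified Lean document; each statement's English description precedes it below -/
import Mathlib

section
/- Let g be a finite-dimensional real Lie algebra that admits an invariant positive definite symmetric bilinear form. Then the center of g is precisely the set of all elements u ∈ g that are orthogonal to all of g with respect to the scalar product ⟨u,v⟩ = -tr(ad u ∘ ad v); that is, center(g) = { u ∈ g : tr(ad u ∘ ad v) = 0 for all v ∈ g }. -/
/-- Let `g` be a finite-dimensional real Lie algebra admitting an invariant positive
definite symmetric bilinear form. Then the center of `g` is precisely the set of
elements `u` orthogonal to all of `g` with respect to `⟨u,v⟩ = -tr(ad u ∘ ad v)`. -/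
theorem center_eq_killing_orthogonal
    {L : Type*} [LieRing L] [LieAlgebra ℝ L] [FiniteDimensional ℝ L]
    (B : LinearMap.BilinForm ℝ L)
    (hsymm : ∀ u v : L, B u v = B v u)
    (hinv : ∀ x u v : L, B ⁅x, u⁆ v + B u ⁅x, v⁆ = 0)
    (hpos : ∀ u : L, u ≠ 0 → 0 < B u u) :
    ∀ u : L, u ∈ LieAlgebra.center ℝ L ↔
      ∀ v : L, LinearMap.trace ℝ L (LieAlgebra.ad ℝ L u ∘ₗ LieAlgebra.ad ℝ L v) = 0 := by
  intro u
  constructor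
  · intro hu v
    have hf : LieAlgebra.ad ℝ L u = 0 := by
      ext x
      have := hu x
      rw [LieAlgebra.ad_apply, ← lie_skew, this, neg_zero, LinearMap.zero_apply]
    simp [hf]
  · intro h
    -- build inner product space structure from B
    letI core : InnerProductSpace.Core ℝ L :=
      { inner := fun x y => B x y
        conj_inner_symm := fun x y => by simpa using hsymm y x
        re_inner_nonneg := fun x => by
          rcases eq_or_ne x 0 with rfl | hx
          · simp
          · exact le_of_lt (by simpa using hpos x hx)
        add_left := fun x y z => by simp
        smul_left := fun x y r => by simp
        definite := fun x hx => by
          by_contra hne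
          exact absurd hx (ne_of_gt (by simpa using hpos x hne)) }
    letI : NormedAddCommGroup L := core.toNormedAddCommGroup
    letI : InnerProductSpace ℝ L := InnerProductSpace.ofCore core.toCore
    have hinner : ∀ x y : L, (inner ℝ x y : ℝ) = B x y := fun x y => rfl
    set f := LieAlgebra.ad ℝ L u with hfdef
    -- f is skew-adjoint
    have hskew : ∀ x y : L, B x (f y) = - B y (f x) := by
      intro x y
      have h1 := hinv u y x
      have h2 : B ⁅u, y⁆ x = - B y ⁅u, x⁆ := by linarith
      calc B x (f y) = B ⁅u, y⁆ x := by rw [hsymm]; rfl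
        _ = - B y ⁅u, x⁆ := h2
        _ = - B y (f x) := rfl
    have b := stdOrthonormalBasis ℝ L
    set M := LinearMap.toMatrix b.toBasis b.toBasis f with hM
    have hMentry : ∀ i j, M i j = B (b i) (f (b j)) := by
      intro i j
      rw [hM, LinearMap.toMatrix_apply, OrthonormalBasis.coe_toBasis,
        OrthonormalBasis.coe_toBasis_repr_apply, OrthonormalBasis.repr_apply_apply]
      exact hinner _ _
    have hMskew : ∀ i j, M i j = - M j i := by
      intro i j
      rw [hMentry, hMentry, hskew]
    have htr : LinearMap.trace ℝ L (f ∘ₗ f) = Matrix.trace (M * M) := by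
      rw [LinearMap.trace_eq_matrix_trace ℝ b.toBasis, LinearMap.toMatrix_comp _ b.toBasis, ← hM]
    have htr0 : Matrix.trace (M * M) = 0 := by rw [← htr]; exact h u
    have hsum : ∑ i, ∑ j, (M i j)^2 = 0 := by
      have : Matrix.trace (M * M) = ∑ i, ∑ j, M i j * M j i := by
        simp [Matrix.trace, Matrix.mul_apply, Matrix.diag]
      rw [this] at htr0
      have : ∑ i, ∑ j, (M i j)^2 = - ∑ i, ∑ j, M i j * M j i := by
        rw [← Finset.sum_neg_distrib]
        refine Finset.sum_congr rfl fun i _ => ?_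
        rw [← Finset.sum_neg_distrib]
        refine Finset.sum_congr rfl fun j _ => ?_
        rw [hMskew i j]; ring
      rw [this, htr0, neg_zero]
    have hM0 : M = 0 := by
      ext i j
      have h1 : ∀ i ∈ (Finset.univ : Finset _), ∑ j, (M i j)^2 = 0 := by
        refine (Finset.sum_eq_zero_iff_of_nonneg (fun i _ => Finset.sum_nonneg fun j _ => sq_nonneg (M i j))).mp ?_
        exact hsum
      have h2 := (Finset.sum_eq_zero_iff_of_nonneg (fun j _ => sq_nonneg (M i j))).mp
        (h1 i (Finset.mem_univ i)) j (Finset.mem_univ j)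
      simpa using pow_eq_zero_iff (n := 2) (by norm_num) |>.mp h2
    have hf0 : f = 0 := by
      apply (LinearMap.toMatrix b.toBasis b.toBasis).injective
      rw [← hM, hM0]
      simp
    rw [LieAlgebra.center, LieModule.mem_maxTrivSubmodule]
    intro x
    have : ⁅u, x⁆ = 0 := by
      have := congrArg (fun g : Module.End ℝ L => g x) hf0
      simpa [hfdef, LieAlgebra.ad_apply] using this
    rw [← lie_skew, this, neg_zero]
end

section
/- Let g be a finite-dimensional real Lie algebra that admits an invariant positive definite symmetric bilinear form, and suppose the center of g is trivial. Then the scalar product ⟨u,v⟩ = -tr(ad u ∘ ad v) is itself positive definite on g, i.e., -tr(ad u ∘ ad u) > 0 for every nonzero u ∈ g. -/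
open scoped RealInnerProductSpace


/-- Let `g` be a finite-dimensional real Lie algebra admitting an invariant positive
definite symmetric bilinear form, with trivial center. Then the scalar product
`⟨u,v⟩ = -tr(ad u ∘ ad v)` is itself positive definite on `g`. -/
theorem neg_killing_posDef_of_trivial_center
    {L : Type*} [LieRing L] [LieAlgebra ℝ L] [FiniteDimensional ℝ L]
    (B : LinearMap.BilinForm ℝ L)
    (hsymm : ∀ u v : L, B u v = B v u)
    (hinv : ∀ x u v : L, B ⁅x, u⁆ v + B u ⁅x, v⁆ = 0)
    (hpos : ∀ u : L, u ≠ 0 → 0 < B u u)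
    (hcenter : LieAlgebra.center ℝ L = ⊥) :
    ∀ u : L, u ≠ 0 →
      0 < -(LinearMap.trace ℝ L (LieAlgebra.ad ℝ L u ∘ₗ LieAlgebra.ad ℝ L u)) := by
  intro u hu
  -- Build an inner product space structure from B
  letI c : InnerProductSpace.Core ℝ L :=
    { inner := fun x y => B x y
      conj_inner_symm := fun x y => by simpa using hsymm y x
      re_inner_nonneg := fun x => by
        rcases eq_or_ne x 0 with rfl | hx
        · simp
        · exact le_of_lt (by simpa using hpos x hx)
      definite := fun x hx => by
        by_contra h
        exact (hpos x h).ne' hx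
      add_left := fun x y z => by simp
      smul_left := fun x y r => by simp }
  letI : NormedAddCommGroup L := c.toNormedAddCommGroup
  letI : InnerProductSpace ℝ L := InnerProductSpace.ofCore c.toCore
  set A : L →ₗ[ℝ] L := LieAlgebra.ad ℝ L u with hA
  -- A is nonzero since the center is trivial
  have hAne : A ≠ 0 := by
    intro h0
    apply hu
    have hmem : u ∈ LieAlgebra.center ℝ L := by
      intro x
      have : A x = 0 := by rw [h0]; rfl
      have h1 : ⁅u, x⁆ = 0 := this
      calc ⁅x, u⁆ = -⁅u, x⁆ := by rw [← lie_skew]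
        _ = 0 := by rw [h1, neg_zero]
    rw [hcenter] at hmem
    simpa using hmem
  -- A is skew with respect to the inner product
  have hskew : ∀ x y : L, (inner ℝ (A x) y : ℝ) = -(inner ℝ x (A y) : ℝ) := by
    intro x y
    have := hinv u x y
    have hx : A x = ⁅u, x⁆ := rfl
    have hy : A y = ⁅u, y⁆ := rfl
    rw [hx, hy]
    change B ⁅u, x⁆ y = -(B x ⁅u, y⁆)
    linarith [hinv u x y]
  -- compute the trace via an orthonormal basis
  obtain ⟨n, b⟩ : ∃ n, Nonempty (OrthonormalBasis (Fin n) ℝ L) :=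
    ⟨Module.finrank ℝ L, ⟨stdOrthonormalBasis ℝ L⟩⟩
  obtain ⟨b⟩ := b
  have htr : LinearMap.trace ℝ L (A ∘ₗ A) = ∑ i, (inner ℝ (b i) (A (A (b i))) : ℝ) := by
    rw [LinearMap.trace_eq_matrix_trace ℝ b.toBasis, Matrix.trace]
    congr 1
    ext i
    rw [Matrix.diag_apply, LinearMap.toMatrix_apply, b.coe_toBasis,
      b.coe_toBasis_repr_apply, b.repr_apply_apply]
    rfl
  have hterm : ∀ i, (inner ℝ (b i) (A (A (b i))) : ℝ) = -‖A (b i)‖ ^ 2 := by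
    intro i
    have := hskew (A (b i)) (b i)
    rw [real_inner_comm] at this
    rw [show (inner ℝ (b i) (A (A (b i))) : ℝ) = -(inner ℝ (A (b i)) (A (b i)) : ℝ) by linarith,
      real_inner_self_eq_norm_sq]
  have hsum : (LinearMap.trace ℝ L) (A ∘ₗ A) = -∑ i, ‖A (b i)‖ ^ 2 := by
    rw [htr]
    rw [← Finset.sum_neg_distrib]
    exact Finset.sum_congr rfl fun i _ => hterm i
  rw [hsum, neg_neg]
  -- some basis vector has nonzero image
  have hex : ∃ i, A (b i) ≠ 0 := by
    by_contra h
    push_neg at h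
    apply hAne
    apply b.toBasis.ext
    intro i
    simpa using h i
  obtain ⟨i, hi⟩ := hex
  have : (0:ℝ) < ‖A (b i)‖ ^ 2 := pow_pos (norm_pos_iff.mpr hi) 2
  refine Finset.sum_pos' (fun j _ => by positivity) ⟨i, Finset.mem_univ i, this⟩
end

section
/- Let g be a finite-dimensional real Lie algebra such that the scalar product ⟨u,v⟩ = -tr(ad u ∘ ad v) is positive definite. Then the set of all automorphisms of g, regarded as a subset of the (finite-dimensional, normed) space of linear endomorphisms of g, is compact. -/
section Aux

variable {E : Type*} [NormedAddCommGroup E] [NormedSpace ℝ E] [FiniteDimensional ℝ E]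

/-- The (negative of the) Killing form as a bilinear map. -/
noncomputable def killingAux (bracket : E →ₗ[ℝ] E →ₗ[ℝ] E) : E →ₗ[ℝ] E →ₗ[ℝ] ℝ :=
  LinearMap.mk₂ ℝ (fun u v => -(LinearMap.trace ℝ E (bracket u ∘ₗ bracket v)))
    (by intro u u' v; rw [map_add, LinearMap.add_comp, map_add, neg_add])
    (by intro a u v; rw [map_smul, LinearMap.smul_comp, map_smul, smul_neg])
    (by intro u v v'; rw [map_add, LinearMap.comp_add, map_add, neg_add])
    (by intro a u v; rw [map_smul, LinearMap.comp_smul, map_smul, smul_neg])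

@[simp] lemma killingAux_apply (bracket : E →ₗ[ℝ] E →ₗ[ℝ] E) (u v : E) :
    killingAux bracket u v = -(LinearMap.trace ℝ E (bracket u ∘ₗ bracket v)) := rfl

/-- An automorphism preserves the Killing form. -/
lemma killing_invariant (bracket : E →ₗ[ℝ] E →ₗ[ℝ] E) (f : E →L[ℝ] E)
    (hbij : Function.Bijective f)
    (hmul : ∀ x y : E, f (bracket x y) = bracket (f x) (f y)) (u v : E) :
    killingAux bracket (f u) (f v) = killingAux bracket u v := by
  have hbij' : Function.Bijective (f.toLinearMap) := hbij
  set e : E ≃ₗ[ℝ] E := LinearEquiv.ofBijective f.toLinearMap hbij' with he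
  have he_apply : ∀ x : E, e x = f x := fun x => rfl
  have key : ∀ w : E, bracket (f w) = e.conj (bracket w) := by
    intro w
    ext x
    have hfx : f (e.symm x) = x := by
      rw [← he_apply]; exact e.apply_symm_apply x
    rw [LinearEquiv.conj_apply_apply]
    calc bracket (f w) x = bracket (f w) (f (e.symm x)) := by rw [hfx]
      _ = f (bracket w (e.symm x)) := (hmul w (e.symm x)).symm
      _ = e (bracket w (e.symm x)) := rfl
  have hcomp : bracket (f u) ∘ₗ bracket (f v) = e.conj (bracket u ∘ₗ bracket v) := by
    rw [key u, key v, LinearEquiv.conj_comp]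
  simp only [killingAux_apply, hcomp, LinearMap.trace_conj']

end Aux

/-- Let `g` be a finite-dimensional real Lie algebra (realized as a finite-dimensional
real normed space `E` with a Lie bracket given by a bilinear map satisfying
antisymmetry and the Jacobi identity) such that `⟨u,v⟩ = -tr(ad u ∘ ad v)` is
positive definite.  Then the set of all automorphisms of `g`, regarded as a subset
of the (finite-dimensional, normed) space of linear endomorphisms of `g`, is compact. -/
theorem automorphism_group_isCompact
    {E : Type*} [NormedAddCommGroup E] [NormedSpace ℝ E] [FiniteDimensional ℝ E]
    (bracket : E →ₗ[ℝ] E →ₗ[ℝ] E)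
    (hskew : ∀ x : E, bracket x x = 0)
    (hjacobi : ∀ x y z : E,
      bracket x (bracket y z) + bracket y (bracket z x) + bracket z (bracket x y) = 0)
    (hpos : ∀ u : E, u ≠ 0 → 0 < -(LinearMap.trace ℝ E (bracket u ∘ₗ bracket u))) :
    IsCompact {f : E →L[ℝ] E | Function.Bijective f ∧
      ∀ x y : E, f (bracket x y) = bracket (f x) (f y)} := by
  classical
  set K := killingAux bracket with hK
  have hKpos : ∀ u : E, u ≠ 0 → 0 < K u u := fun u hu => hpos u hu
  -- the continuous version of K
  set KC : E →L[ℝ] E →L[ℝ] ℝ :=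
    LinearMap.toContinuousLinearMap
      ((LinearMap.toContinuousLinearMap :
        (E →ₗ[ℝ] ℝ) ≃ₗ[ℝ] (E →L[ℝ] ℝ)).toLinearMap ∘ₗ K) with hKC
  have hKC_apply : ∀ u v : E, KC u v = K u v := fun u v => rfl
  have hKCcont : Continuous fun p : E × E => K p.1 p.2 := by
    have := KC.continuous₂
    simpa [hKC_apply, Function.uncurry_def] using this
  -- the continuous version of bracket
  set BC : E →L[ℝ] E →L[ℝ] E :=
    LinearMap.toContinuousLinearMap
      ((LinearMap.toContinuousLinearMap :
        (E →ₗ[ℝ] E) ≃ₗ[ℝ] (E →L[ℝ] E)).toLinearMap ∘ₗ bracket) with hBC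
  have hBC_apply : ∀ u v : E, BC u v = bracket u v := fun u v => rfl
  have hBCcont : Continuous fun p : E × E => bracket p.1 p.2 := by
    have := BC.continuous₂
    simpa [hBC_apply, Function.uncurry_def] using this
  -- the set
  set S := {f : E →L[ℝ] E | Function.Bijective f ∧
      ∀ x y : E, f (bracket x y) = bracket (f x) (f y)} with hS
  -- the closed description of S
  set S' := {f : E →L[ℝ] E | (∀ u v : E, K (f u) (f v) = K u v) ∧
      ∀ x y : E, f (bracket x y) = bracket (f x) (f y)} with hS'
  have hSS' : S = S' := by
    ext f
    constructor
    · rintro ⟨hbij, hmul⟩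
      exact ⟨fun u v => killing_invariant bracket f hbij hmul u v, hmul⟩
    · rintro ⟨hinv, hmul⟩
      refine ⟨?_, hmul⟩
      have hinj : Function.Injective f.toLinearMap := by
        rw [← LinearMap.ker_eq_bot, LinearMap.ker_eq_bot']
        intro m hm
        by_contra hm0
        have := hKpos m hm0
        have h2 : K (f m) (f m) = K m m := hinv m m
        have hfm : f m = 0 := hm
        rw [hfm] at h2
        simp at h2
        rw [← h2] at this
        exact lt_irrefl _ this
      exact ⟨hinj, (LinearMap.injective_iff_surjective).mp hinj⟩
  -- closedness
  have hclosed : IsClosed S := by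
    rw [hSS', hS']
    have h1 : IsClosed {f : E →L[ℝ] E | ∀ u v : E, K (f u) (f v) = K u v} := by
      have : {f : E →L[ℝ] E | ∀ u v : E, K (f u) (f v) = K u v} =
          ⋂ (u : E) (v : E), {f : E →L[ℝ] E | K (f u) (f v) = K u v} := by
        ext f; simp
      rw [this]
      refine isClosed_iInter fun u => isClosed_iInter fun v => ?_
      have hc1 : Continuous fun f : E →L[ℝ] E => K (f u) (f v) := by
        have hpair : Continuous fun f : E →L[ℝ] E => ((f u, f v) : E × E) :=
          ((ContinuousLinearMap.apply ℝ E u).continuous).prodMk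
            ((ContinuousLinearMap.apply ℝ E v).continuous)
        exact hKCcont.comp hpair
      exact isClosed_eq hc1 continuous_const
    have h2 : IsClosed {f : E →L[ℝ] E | ∀ x y : E, f (bracket x y) = bracket (f x) (f y)} := by
      have : {f : E →L[ℝ] E | ∀ x y : E, f (bracket x y) = bracket (f x) (f y)} =
          ⋂ (x : E) (y : E), {f : E →L[ℝ] E | f (bracket x y) = bracket (f x) (f y)} := by
        ext f; simp
      rw [this]
      refine isClosed_iInter fun x => isClosed_iInter fun y => ?_
      refine isClosed_eq ((ContinuousLinearMap.apply ℝ E (bracket x y)).continuous) ?_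
      have hpair : Continuous fun f : E →L[ℝ] E => ((f x, f y) : E × E) :=
        ((ContinuousLinearMap.apply ℝ E x).continuous).prodMk
          ((ContinuousLinearMap.apply ℝ E y).continuous)
      exact hBCcont.comp hpair
    exact h1.inter h2
  -- boundedness
  by_cases hE : Subsingleton E
  · have : Subsingleton (E →L[ℝ] E) := by
      constructor; intro a b; ext x; exact Subsingleton.elim _ _
    exact (Set.toFinite S).isCompact
  · have : Nontrivial E := not_subsingleton_iff_nontrivial.mp hE
    -- bounds on the sphere
    have hsph : IsCompact (Metric.sphere (0 : E) 1) := isCompact_sphere 0 1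
    have hsphne : (Metric.sphere (0 : E) 1).Nonempty :=
      NormedSpace.sphere_nonempty.mpr zero_le_one
    have hqcont : Continuous fun x : E => K x x :=
      hKCcont.comp (continuous_id.prodMk continuous_id)
    obtain ⟨xm, hxm, hxm_min⟩ := hsph.exists_isMinOn hsphne hqcont.continuousOn
    obtain ⟨xM, hxM, hxM_max⟩ := hsph.exists_isMaxOn hsphne hqcont.continuousOn
    set c := K xm xm with hc
    set C := K xM xM with hCdef
    have hc_pos : 0 < c := by
      apply hKpos
      intro h
      rw [h] at hxm
      simp at hxm
    have hquad : ∀ (a : ℝ) (x : E), K (a • x) (a • x) = a ^ 2 * K x x := by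
      intro a x
      simp [map_smul, LinearMap.smul_apply, smul_eq_mul]
      ring
    have hlow : ∀ y : E, c * ‖y‖ ^ 2 ≤ K y y := by
      intro y
      rcases eq_or_ne y 0 with rfl | hy
      · simp
      · have hny : ‖y‖ ≠ 0 := norm_ne_zero_iff.mpr hy
        have hu : (‖y‖⁻¹ • y) ∈ Metric.sphere (0 : E) 1 := by
          simp [norm_smul, abs_of_nonneg (norm_nonneg y), inv_mul_cancel₀ hny]
        have this : K xm xm ≤ K (‖y‖⁻¹ • y) (‖y‖⁻¹ • y) := hxm_min hu
        have heq : K (‖y‖⁻¹ • y) (‖y‖⁻¹ • y) = (‖y‖⁻¹) ^ 2 * K y y := hquad _ _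
        rw [heq] at this
        have hn2 : (0:ℝ) < ‖y‖ ^ 2 := by positivity
        calc c * ‖y‖ ^ 2 ≤ ((‖y‖⁻¹) ^ 2 * K y y) * ‖y‖ ^ 2 := by
              exact mul_le_mul_of_nonneg_right this (le_of_lt hn2)
          _ = K y y := by field_simp
    have hhigh : ∀ y : E, K y y ≤ C * ‖y‖ ^ 2 := by
      intro y
      rcases eq_or_ne y 0 with rfl | hy
      · simp
      · have hny : ‖y‖ ≠ 0 := norm_ne_zero_iff.mpr hy
        have hu : (‖y‖⁻¹ • y) ∈ Metric.sphere (0 : E) 1 := by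
          simp [norm_smul, abs_of_nonneg (norm_nonneg y), inv_mul_cancel₀ hny]
        have this : K (‖y‖⁻¹ • y) (‖y‖⁻¹ • y) ≤ K xM xM := hxM_max hu
        have heq : K (‖y‖⁻¹ • y) (‖y‖⁻¹ • y) = (‖y‖⁻¹) ^ 2 * K y y := hquad _ _
        rw [heq] at this
        have hn2 : (0:ℝ) < ‖y‖ ^ 2 := by positivity
        calc K y y = ((‖y‖⁻¹) ^ 2 * K y y) * ‖y‖ ^ 2 := by field_simp
          _ ≤ C * ‖y‖ ^ 2 := mul_le_mul_of_nonneg_right this (le_of_lt hn2)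
    have hC_nonneg : 0 ≤ C := le_trans (le_of_lt hc_pos) (hxM_max hxm)
    set R := Real.sqrt (C / c) with hR
    have hbdd : S ⊆ Metric.closedBall 0 R := by
      intro f hf
      rw [hSS'] at hf
      obtain ⟨hinv, _⟩ := hf
      rw [Metric.mem_closedBall, dist_zero_right]
      refine ContinuousLinearMap.opNorm_le_bound f (Real.sqrt_nonneg _) fun x => ?_
      have h1 : c * ‖f x‖ ^ 2 ≤ K (f x) (f x) := hlow (f x)
      rw [hinv x x] at h1
      have h2 : K x x ≤ C * ‖x‖ ^ 2 := hhigh x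
      have h3 : ‖f x‖ ^ 2 ≤ (C / c) * ‖x‖ ^ 2 := by
        rw [div_mul_eq_mul_div, le_div_iff₀ hc_pos]
        calc ‖f x‖ ^ 2 * c = c * ‖f x‖ ^ 2 := by ring
          _ ≤ K x x := h1
          _ ≤ C * ‖x‖ ^ 2 := h2
      have h4 : ‖f x‖ ≤ Real.sqrt ((C / c) * ‖x‖ ^ 2) := by
        rw [← Real.sqrt_sq (norm_nonneg (f x))]
        exact Real.sqrt_le_sqrt h3
      calc ‖f x‖ ≤ Real.sqrt ((C / c) * ‖x‖ ^ 2) := h4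
        _ = Real.sqrt (C / c) * Real.sqrt (‖x‖ ^ 2) := Real.sqrt_mul (by positivity) _
        _ = R * ‖x‖ := by rw [Real.sqrt_sq (norm_nonneg x)]
    have hSbdd : Bornology.IsBounded S :=
      (Metric.isBounded_closedBall).subset hbdd
    exact Metric.isCompact_of_isClosed_isBounded hclosed hSbdd
end

section
/- (Orthogonality of characters of inequivalent irreducible representations) Let G be a compact topological group with Haar probability measure μ. Let Φ and Ψ be continuous unitary representations of G, both irreducible and not equivalent, with characters χ(x) = tr Φ(x) and χ'(x) = tr Ψ(x). Then ∫_G χ(x) · conj(χ'(x)) dμ(x) = 0. -/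
open MeasureTheory Matrix

/-- Schur's lemma, matrix form: a nonzero intertwiner between irreducible
representations is bijective; hence if no bijective intertwiner exists, every
intertwiner is zero. -/
lemma schur_intertwiner_eq_zero {G : Type*} [Group G] {m n : ℕ}
    (Φ : G →* Matrix.unitaryGroup (Fin m) ℂ) (Ψ : G →* Matrix.unitaryGroup (Fin n) ℂ)
    (hΦirr : ∀ W : Submodule ℂ (Fin m → ℂ),
      (∀ x : G, ∀ v ∈ W, (Φ x : Matrix (Fin m) (Fin m) ℂ).mulVec v ∈ W) → W = ⊥ ∨ W = ⊤)
    (hΨirr : ∀ W : Submodule ℂ (Fin n → ℂ),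
      (∀ x : G, ∀ v ∈ W, (Ψ x : Matrix (Fin n) (Fin n) ℂ).mulVec v ∈ W) → W = ⊥ ∨ W = ⊤)
    (hneq : ¬ ∃ T : Matrix (Fin n) (Fin m) ℂ, Function.Bijective T.mulVecLin ∧
      ∀ x : G, (Ψ x : Matrix (Fin n) (Fin n) ℂ) * T = T * (Φ x : Matrix (Fin m) (Fin m) ℂ))
    (S : Matrix (Fin m) (Fin n) ℂ)
    (hS : ∀ x : G, (Φ x : Matrix (Fin m) (Fin m) ℂ) * S
      = S * (Ψ x : Matrix (Fin n) (Fin n) ℂ)) :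
    S = 0 := by
  by_contra hS0
  have hSlin : S.mulVecLin ≠ 0 := by
    intro h
    apply hS0
    have := Matrix.toLin'.injective (a₁ := S) (a₂ := 0) ?_
    · exact this
    · rw [Matrix.toLin'_apply', h]; ext v i; simp
  have hker : LinearMap.ker S.mulVecLin = ⊥ := by
    have hinv : ∀ x : G, ∀ v ∈ LinearMap.ker S.mulVecLin,
        (Ψ x : Matrix (Fin n) (Fin n) ℂ).mulVec v ∈ LinearMap.ker S.mulVecLin := by
      intro x v hv
      rw [LinearMap.mem_ker] at hv ⊢
      have : S.mulVec ((Ψ x : Matrix (Fin n) (Fin n) ℂ).mulVec v)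
          = (S * (Ψ x : Matrix (Fin n) (Fin n) ℂ)).mulVec v := by
        rw [Matrix.mulVec_mulVec]
      rw [Matrix.mulVecLin_apply] at hv ⊢
      rw [this, ← hS, ← Matrix.mulVec_mulVec, hv, Matrix.mulVec_zero]
    rcases hΨirr _ hinv with h | h
    · exact h
    · exact absurd (LinearMap.ker_eq_top.mp h) hSlin
  have hrange : LinearMap.range S.mulVecLin = ⊤ := by
    have hinv : ∀ x : G, ∀ v ∈ LinearMap.range S.mulVecLin,
        (Φ x : Matrix (Fin m) (Fin m) ℂ).mulVec v ∈ LinearMap.range S.mulVecLin := by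
      rintro x v ⟨w, rfl⟩
      refine ⟨(Ψ x : Matrix (Fin n) (Fin n) ℂ).mulVec w, ?_⟩
      rw [Matrix.mulVecLin_apply, Matrix.mulVec_mulVec, ← hS, ← Matrix.mulVec_mulVec,
        Matrix.mulVecLin_apply]
    rcases hΦirr _ hinv with h | h
    · exact absurd (LinearMap.range_eq_bot.mp h) hSlin
    · exact h
  have hbij : Function.Bijective S.mulVecLin :=
    ⟨LinearMap.ker_eq_bot.mp hker, LinearMap.range_eq_top.mp hrange⟩
  set e := LinearEquiv.ofBijective S.mulVecLin hbij with he
  have hecoe : ∀ v, e v = S.mulVec v := fun v => rfl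
  refine hneq ⟨LinearMap.toMatrix' (e.symm : (Fin m → ℂ) →ₗ[ℂ] (Fin n → ℂ)), ?_, ?_⟩
  · have : (LinearMap.toMatrix' (e.symm : (Fin m → ℂ) →ₗ[ℂ] (Fin n → ℂ))).mulVecLin
        = (e.symm : (Fin m → ℂ) →ₗ[ℂ] (Fin n → ℂ)) := by
      rw [← Matrix.toLin'_apply', Matrix.toLin'_toMatrix']
    rw [this]
    exact e.symm.bijective
  · intro x
    set T := LinearMap.toMatrix' (e.symm : (Fin m → ℂ) →ₗ[ℂ] (Fin n → ℂ)) with hT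
    have hTlin : T.mulVecLin = (e.symm : (Fin m → ℂ) →ₗ[ℂ] (Fin n → ℂ)) := by
      rw [hT, ← Matrix.toLin'_apply', Matrix.toLin'_toMatrix']
    apply Matrix.toLin'.injective
    rw [Matrix.toLin'_apply', Matrix.toLin'_apply', Matrix.mulVecLin_mul, Matrix.mulVecLin_mul,
      hTlin]
    refine LinearMap.ext fun v => ?_
    simp only [LinearMap.comp_apply, LinearEquiv.coe_coe]
    set w := e.symm v with hw
    have hv : v = S.mulVec w := by
      have := e.apply_symm_apply v
      rw [← hw] at this; rw [← hecoe, this]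
    rw [hv]
    have h1 : (Φ x : Matrix (Fin m) (Fin m) ℂ).mulVecLin (S.mulVec w)
        = S.mulVec ((Ψ x : Matrix (Fin n) (Fin n) ℂ).mulVec w) := by
      rw [Matrix.mulVecLin_apply, Matrix.mulVec_mulVec, hS, ← Matrix.mulVec_mulVec]
    rw [h1]
    have h2 : e.symm (S.mulVec ((Ψ x : Matrix (Fin n) (Fin n) ℂ).mulVec w))
        = (Ψ x : Matrix (Fin n) (Fin n) ℂ).mulVec w := by
      rw [← hecoe, e.symm_apply_apply]
    rw [h2]
    have h3 : e.symm (S.mulVec w) = w := by rw [← hecoe, e.symm_apply_apply]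
    rw [Matrix.mulVecLin_apply]

/-- Orthogonality of characters: the characters of two inequivalent continuous
irreducible unitary representations of a compact group are orthogonal. -/
theorem integral_char_mul_conj_char_eq_zero
    {G : Type*} [Group G] [TopologicalSpace G] [IsTopologicalGroup G] [CompactSpace G]
    [MeasurableSpace G] [BorelSpace G]
    (μ : Measure G) [μ.IsHaarMeasure] [μ.IsMulRightInvariant] [IsProbabilityMeasure μ]
    {m n : ℕ}
    (Φ : G →* Matrix.unitaryGroup (Fin m) ℂ) (Ψ : G →* Matrix.unitaryGroup (Fin n) ℂ)
    (hΦcont : Continuous fun x : G => (Φ x : Matrix (Fin m) (Fin m) ℂ))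
    (hΨcont : Continuous fun x : G => (Ψ x : Matrix (Fin n) (Fin n) ℂ))
    (hΦirr : ∀ W : Submodule ℂ (Fin m → ℂ),
      (∀ x : G, ∀ v ∈ W, (Φ x : Matrix (Fin m) (Fin m) ℂ).mulVec v ∈ W) → W = ⊥ ∨ W = ⊤)
    (hΨirr : ∀ W : Submodule ℂ (Fin n → ℂ),
      (∀ x : G, ∀ v ∈ W, (Ψ x : Matrix (Fin n) (Fin n) ℂ).mulVec v ∈ W) → W = ⊥ ∨ W = ⊤)
    (hneq : ¬ ∃ T : Matrix (Fin n) (Fin m) ℂ, Function.Bijective T.mulVecLin ∧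
      ∀ x : G, (Ψ x : Matrix (Fin n) (Fin n) ℂ) * T = T * (Φ x : Matrix (Fin m) (Fin m) ℂ)) :
    ∫ x : G, Matrix.trace (Φ x : Matrix (Fin m) (Fin m) ℂ) *
      (starRingEnd ℂ) (Matrix.trace (Ψ x : Matrix (Fin n) (Fin n) ℂ)) ∂μ = 0 := by
  classical
  -- the averaged matrix
  set g : Matrix (Fin m) (Fin n) ℂ → G → Matrix (Fin m) (Fin n) ℂ := fun A x =>
    (Φ x : Matrix (Fin m) (Fin m) ℂ) * A * star (Ψ x : Matrix (Fin n) (Fin n) ℂ) with hg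
  have hgcont : ∀ A, Continuous (g A) := fun A =>
    (hΦcont.matrix_mul continuous_const).matrix_mul hΨcont.matrix_conjTranspose
  have hgint : ∀ A (i : Fin m) (j : Fin n), Integrable (fun x => g A x i j) μ := fun A i j =>
    ((hgcont A).matrix_elem i j).integrable_of_hasCompactSupport
      (HasCompactSupport.of_compactSpace _)
  set S : Matrix (Fin m) (Fin n) ℂ → Matrix (Fin m) (Fin n) ℂ := fun A =>
    Matrix.of fun i j => ∫ x, g A x i j ∂μ with hSdef
  -- key pointwise identity
  have key : ∀ A (y x : G), (Φ y : Matrix (Fin m) (Fin m) ℂ) * g A x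
      = g A (y * x) * (Ψ y : Matrix (Fin n) (Fin n) ℂ) := by
    intro A y x
    have hΦm : (Φ (y * x) : Matrix (Fin m) (Fin m) ℂ)
        = (Φ y : Matrix (Fin m) (Fin m) ℂ) * (Φ x : Matrix (Fin m) (Fin m) ℂ) := by
      rw [_root_.map_mul]; rfl
    have hΨm : (Ψ (y * x) : Matrix (Fin n) (Fin n) ℂ)
        = (Ψ y : Matrix (Fin n) (Fin n) ℂ) * (Ψ x : Matrix (Fin n) (Fin n) ℂ) := by
      rw [_root_.map_mul]; rfl
    have h1 : star (Ψ y : Matrix (Fin n) (Fin n) ℂ) * (Ψ y : Matrix (Fin n) (Fin n) ℂ) = 1 :=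
      Matrix.UnitaryGroup.star_mul_self (Ψ y)
    simp only [hg, hΦm, hΨm, Matrix.star_mul, Matrix.mul_assoc, h1, Matrix.mul_one]
  -- intertwining property of S A
  have hint : ∀ A (y : G), (Φ y : Matrix (Fin m) (Fin m) ℂ) * S A
      = S A * (Ψ y : Matrix (Fin n) (Fin n) ℂ) := by
    intro A y
    ext i j
    rw [Matrix.mul_apply, Matrix.mul_apply]
    have lhs : ∑ k, (Φ y : Matrix (Fin m) (Fin m) ℂ) i k * S A k j
        = ∫ x, ((Φ y : Matrix (Fin m) (Fin m) ℂ) * g A x) i j ∂μ := by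
      have : ∀ k, (Φ y : Matrix (Fin m) (Fin m) ℂ) i k * S A k j
          = ∫ x, (Φ y : Matrix (Fin m) (Fin m) ℂ) i k * g A x k j ∂μ := by
        intro k
        rw [hSdef]
        simp only [Matrix.of_apply]
        rw [integral_const_mul]
      rw [Finset.sum_congr rfl (fun k _ => this k),
        ← integral_finset_sum _ (fun k _ => (hgint A k j).const_mul _)]
      congr 1
    have rhs : ∑ k, S A i k * (Ψ y : Matrix (Fin n) (Fin n) ℂ) k j
        = ∫ x, (g A x * (Ψ y : Matrix (Fin n) (Fin n) ℂ)) i j ∂μ := by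
      have : ∀ k, S A i k * (Ψ y : Matrix (Fin n) (Fin n) ℂ) k j
          = ∫ x, g A x i k * (Ψ y : Matrix (Fin n) (Fin n) ℂ) k j ∂μ := by
        intro k
        rw [hSdef]
        simp only [Matrix.of_apply]
        rw [integral_mul_const]
      rw [Finset.sum_congr rfl (fun k _ => this k),
        ← integral_finset_sum _ (fun k _ => (hgint A i k).mul_const _)]
      congr 1
    rw [lhs, rhs]
    have step : ∫ x, ((Φ y : Matrix (Fin m) (Fin m) ℂ) * g A x) i j ∂μ
        = ∫ x, (g A (y * x) * (Ψ y : Matrix (Fin n) (Fin n) ℂ)) i j ∂μ := by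
      congr 1; ext x; rw [key A y x]
    rw [step]
    exact integral_mul_left_eq_self (fun x => (g A x * (Ψ y : Matrix (Fin n) (Fin n) ℂ)) i j) y
  -- Schur: S A = 0 for every A
  have hSzero : ∀ A, S A = 0 := fun A =>
    schur_intertwiner_eq_zero Φ Ψ hΦirr hΨirr hneq (S A) (fun y => hint A y)
  -- entry computation for standard basis matrices
  have hentry : ∀ (k : Fin m) (l : Fin n) (x : G),
      g (Matrix.single k l (1 : ℂ)) x k l
        = (Φ x : Matrix (Fin m) (Fin m) ℂ) k k
          * star (Ψ x : Matrix (Fin n) (Fin n) ℂ) l l := by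
    intro k l x
    simp only [hg]
    rw [Matrix.mul_apply]
    have h1 : ∀ q : Fin n,
        ((Φ x : Matrix (Fin m) (Fin m) ℂ) * Matrix.single k l (1 : ℂ)) k q
          = if l = q then (Φ x : Matrix (Fin m) (Fin m) ℂ) k k else 0 := by
      intro q
      rw [Matrix.mul_apply]
      simp [Matrix.single, Matrix.of_apply, mul_ite, mul_one, mul_zero, ite_and,
        Finset.sum_ite_eq]
    rw [Finset.sum_congr rfl fun q _ => by rw [h1 q]]
    simp [ite_mul, zero_mul, Finset.sum_ite_eq]
  -- conclude
  have hzero : ∀ (k : Fin m) (l : Fin n),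
      ∫ x, (Φ x : Matrix (Fin m) (Fin m) ℂ) k k
          * star (Ψ x : Matrix (Fin n) (Fin n) ℂ) l l ∂μ = 0 := by
    intro k l
    have := congrFun (congrFun (congrArg (fun M => (M : Matrix (Fin m) (Fin n) ℂ))
      (hSzero (Matrix.single k l (1 : ℂ)))) k) l
    simp only [hSdef, Matrix.of_apply, Matrix.zero_apply] at this
    rw [← this]
    exact integral_congr_ae (Filter.Eventually.of_forall fun x => (hentry k l x).symm)
  have expand : ∀ x : G, Matrix.trace (Φ x : Matrix (Fin m) (Fin m) ℂ) *
      (starRingEnd ℂ) (Matrix.trace (Ψ x : Matrix (Fin n) (Fin n) ℂ))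
      = ∑ k : Fin m, ∑ l : Fin n, (Φ x : Matrix (Fin m) (Fin m) ℂ) k k
          * star (Ψ x : Matrix (Fin n) (Fin n) ℂ) l l := by
    intro x
    rw [Matrix.trace, Matrix.trace, map_sum, Finset.sum_mul_sum]
    refine Finset.sum_congr rfl fun k _ => Finset.sum_congr rfl fun l _ => ?_
    rw [Matrix.star_apply]
    rfl
  rw [MeasureTheory.integral_congr_ae (Filter.Eventually.of_forall expand)]
  have hintkl : ∀ (k : Fin m) (l : Fin n), Integrable (fun x =>
      (Φ x : Matrix (Fin m) (Fin m) ℂ) k k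
        * star (Ψ x : Matrix (Fin n) (Fin n) ℂ) l l) μ := by
    intro k l
    exact (((hΦcont.matrix_elem k k).mul
      (hΨcont.matrix_conjTranspose.matrix_elem l l))).integrable_of_hasCompactSupport
      (HasCompactSupport.of_compactSpace _)
  rw [integral_finset_sum _ (fun k _ => integrable_finset_sum _ (fun l _ => hintkl k l))]
  refine Finset.sum_eq_zero fun k _ => ?_
  rw [integral_finset_sum _ (fun l _ => hintkl k l)]
  refine Finset.sum_eq_zero fun l _ => hzero k l
end
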